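/- Let q : ℕ → (0,1] satisfy the recurrence q(0) = 1, q(n+1) = q(n)(1 − v(q(n))) where v(x) = x^γ V₁(x), γ > 0, V₁ slowly varying at 0 of class C¹ with xV₁′(x)/V₁(x) → 0 at 0, and suppose q(n) → 0. Then v(q(n)) ∼ 1/(γn) as n → ∞. -/

import Mathlib

open Filter Topology Set

/-- For the recurrence `q(0) = 1`, `q(n+1) = q(n)(1 - v(q(n)))`
with `v(x) = x^γ V₁(x)`, `γ > 0`, `V₁ ∈ SV₀*`, and `q(n) → 0`, one has
`v(q(n)) ∼ 1/(γ n)` as `n → ∞`. -/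
theorem stmt17 (γ : ℝ) (hγ : 0 < γ) (V₁ v : ℝ → ℝ)
    (hV₁ : ContDiffOn ℝ 1 V₁ (Ioc 0 1))
    (hV₁pos : ∀ x ∈ Ioc (0:ℝ) 1, 0 < V₁ x)
    (hV₁sv : ∀ t > (0:ℝ), Tendsto (fun x => V₁ (t * x) / V₁ x) (𝓝[>] (0:ℝ)) (𝓝 1))
    (hratio : Tendsto (fun x => x * deriv V₁ x / V₁ x) (𝓝[>] (0:ℝ)) (𝓝 0))
    (hv : ∀ x, v x = x ^ γ * V₁ x)
    (q : ℕ → ℝ) (hq0 : q 0 = 1) (hqmem : ∀ n, q n ∈ Ioc (0:ℝ) 1)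
    (hrec : ∀ n, q (n + 1) = q n * (1 - v (q n)))
    (hlim : Tendsto q atTop (𝓝 0)) :
    Tendsto (fun n : ℕ => γ * (n : ℝ) * v (q n)) atTop (𝓝 1) := by
  have hqpos : ∀ n, 0 < q n := fun n => (hqmem n).1
  have hV₁great : ∀ n, 0 < V₁ (q n) := fun n => hV₁pos _ (hqmem n)
  have hvpos : ∀ n, 0 < v (q n) := by
    intro n; rw [hv]
    exact mul_pos (Real.rpow_pos_of_pos (hqpos n) γ) (hV₁great n)
  have hvlt1 : ∀ n, v (q n) < 1 := by
    intro n
    have h := hqpos (n + 1)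
    rw [hrec n] at h
    nlinarith [hqpos n]
  -- differentiability of V₁ on the open interval
  have hderivAt : ∀ x ∈ Ioo (0:ℝ) 1, HasDerivAt V₁ (deriv V₁ x) x := by
    intro x hx
    have hmem : Ioc (0:ℝ) 1 ∈ 𝓝 x := Ioc_mem_nhds_iff.mpr hx
    exact ((hV₁.differentiableOn one_ne_zero).differentiableAt hmem).hasDerivAt
  have hlogderiv : ∀ x ∈ Ioo (0:ℝ) 1,
      HasDerivAt (fun y => Real.log (V₁ y)) (deriv V₁ x / V₁ x) x := by
    intro x hx
    exact (hderivAt x hx).log (ne_of_gt (hV₁pos x ⟨hx.1, hx.2.le⟩))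
  -- uniform smallness of x V₁'(x)/V₁(x) near 0
  have hband : ∀ ε > (0:ℝ), ∃ δ : ℝ, 0 < δ ∧ δ < 1 ∧
      ∀ x : ℝ, 0 < x → x ≤ δ → |x * deriv V₁ x / V₁ x| ≤ ε := by
    intro ε hε
    have h1 : ∀ᶠ x in 𝓝[>] (0:ℝ), |x * deriv V₁ x / V₁ x| ≤ ε := by
      filter_upwards [Metric.tendsto_nhds.mp hratio ε hε] with x hx
      rw [Real.dist_eq, sub_zero] at hx
      exact hx.le
    rcases mem_nhdsGT_iff_exists_Ioc_subset.mp h1 with ⟨u, hu, hsub⟩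
    refine ⟨min u (1/2), lt_min hu (by norm_num), lt_of_le_of_lt (min_le_right _ _) (by norm_num),
      fun x hx hxδ => hsub ⟨hx, le_trans hxδ (min_le_left _ _)⟩⟩
  -- Step A: v(q n) → 0
  have hv0 : Tendsto (fun n => v (q n)) atTop (𝓝 0) := by
    obtain ⟨δ, hδ0, hδ1, hδ⟩ := hband (γ / 2) (by positivity)
    have key : ∀ x : ℝ, 0 < x → x ≤ δ →
        x ^ (γ / 2) * V₁ x ≤ Real.exp (Real.log (V₁ δ) + γ / 2 * Real.log δ) := by
      intro x hx hxδ
      have hV₁x : 0 < V₁ x := hV₁pos x ⟨hx, le_trans hxδ hδ1.le⟩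
      have hlog : Real.log (V₁ x) + γ / 2 * Real.log x ≤
          Real.log (V₁ δ) + γ / 2 * Real.log δ := by
        rcases eq_or_lt_of_le hxδ with h | h
        · exact le_of_eq (by rw [h])
        · have hgd : ∀ y ∈ Ioo (0:ℝ) 1,
              HasDerivAt (fun y => Real.log (V₁ y) + γ / 2 * Real.log y)
                (deriv V₁ y / V₁ y + γ / 2 * y⁻¹) y := by
            intro y hy
            exact (hlogderiv y hy).add ((Real.hasDerivAt_log (ne_of_gt hy.1)).const_mul (γ / 2))
          have hsub2 : Icc x δ ⊆ Ioo (0:ℝ) 1 := fun y hy =>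
            ⟨lt_of_lt_of_le hx hy.1, lt_of_le_of_lt hy.2 hδ1⟩
          obtain ⟨c, hc, hceq⟩ := exists_hasDerivAt_eq_slope
            (fun y => Real.log (V₁ y) + γ / 2 * Real.log y)
            (fun y => deriv V₁ y / V₁ y + γ / 2 * y⁻¹) h
            (fun y hy => (hgd y (hsub2 hy)).continuousAt.continuousWithinAt)
            (fun y hy => hgd y (hsub2 (Ioo_subset_Icc_self hy)))
          have hc0 : 0 < c := lt_trans hx hc.1
          have hb := hδ c hc0 hc.2.le
          have hr : 0 ≤ deriv V₁ c / V₁ c + γ / 2 * c⁻¹ := by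
            have h1 : -(γ / 2) ≤ c * (deriv V₁ c / V₁ c) := by
              have h2 := (abs_le.mp hb).1
              rw [mul_div_assoc] at h2; linarith
            have h2 : c * (deriv V₁ c / V₁ c + γ / 2 * c⁻¹) =
                c * (deriv V₁ c / V₁ c) + γ / 2 := by
              field_simp
            by_contra hcon
            push_neg at hcon
            nlinarith [mul_pos hc0 (neg_pos.mpr hcon)]
          rw [hceq] at hr
          have hmul := mul_nonneg hr (le_of_lt (sub_pos.mpr h))
          rw [div_mul_cancel₀ _ (ne_of_gt (sub_pos.mpr h))] at hmul
          linarith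
      have hpos : 0 < x ^ (γ / 2) * V₁ x := mul_pos (Real.rpow_pos_of_pos hx _) hV₁x
      rw [← Real.log_le_iff_le_exp hpos]
      rw [Real.log_mul (ne_of_gt (Real.rpow_pos_of_pos hx _)) (ne_of_gt hV₁x),
        Real.log_rpow hx]
      linarith
    have hbnd : ∀ᶠ n in atTop, v (q n) ≤
        Real.exp (Real.log (V₁ δ) + γ / 2 * Real.log δ) * q n ^ (γ / 2) := by
      filter_upwards [hlim.eventually (gt_mem_nhds hδ0)] with n hn
      rw [hv]
      have hsplit : q n ^ γ = q n ^ (γ / 2) * q n ^ (γ / 2) := by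
        rw [← Real.rpow_add (hqpos n)]; norm_num
      rw [hsplit]
      calc q n ^ (γ / 2) * q n ^ (γ / 2) * V₁ (q n)
          = q n ^ (γ / 2) * (q n ^ (γ / 2) * V₁ (q n)) := by ring
        _ ≤ q n ^ (γ / 2) * Real.exp (Real.log (V₁ δ) + γ / 2 * Real.log δ) :=
            mul_le_mul_of_nonneg_left (key _ (hqpos n) hn.le)
              (Real.rpow_nonneg (hqpos n).le _)
        _ = _ := mul_comm _ _
    have hrpow : Tendsto (fun n => q n ^ (γ / 2)) atTop (𝓝 0) := by
      have hc : ContinuousAt (fun x : ℝ => x ^ (γ / 2)) 0 :=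
        Real.continuousAt_rpow_const 0 (γ / 2) (Or.inr (by positivity))
      have := hc.tendsto.comp hlim
      simpa [Real.zero_rpow (by positivity : γ / 2 ≠ 0), Function.comp_def] using this
    exact squeeze_zero' (Eventually.of_forall fun n => (hvpos n).le) hbnd
      (by simpa using hrpow.const_mul (Real.exp (Real.log (V₁ δ) + γ / 2 * Real.log δ)))
  -- Step B: the log-ratio θ is o(v(q n))
  have hqdiff : ∀ n, q n - q (n + 1) = q n * v (q n) := by
    intro n; rw [hrec]; ring
  have hqlt : ∀ n, q (n + 1) < q n := by
    intro n
    nlinarith [hqpos n, hvpos n, hrec n, hqdiff n]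
  have hθbound : ∀ ε > (0:ℝ), ∀ᶠ n in atTop,
      |Real.log (V₁ (q n)) - Real.log (V₁ (q (n + 1)))| ≤
        ε * v (q n) / (1 - v (q n)) := by
    intro ε hε
    obtain ⟨δ, hδ0, hδ1, hδ⟩ := hband ε hε
    filter_upwards [hlim.eventually (gt_mem_nhds hδ0)] with n hn
    have hsub : Icc (q (n + 1)) (q n) ⊆ Ioo (0:ℝ) 1 := fun y hy =>
      ⟨lt_of_lt_of_le (hqpos _) hy.1, lt_of_le_of_lt hy.2 (lt_trans hn hδ1)⟩
    obtain ⟨c, hc, hceq⟩ := exists_hasDerivAt_eq_slope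
      (fun y => Real.log (V₁ y)) (fun y => deriv V₁ y / V₁ y) (hqlt n)
      (fun y hy => (hlogderiv y (hsub hy)).continuousAt.continuousWithinAt)
      (fun y hy => hlogderiv y (hsub (Ioo_subset_Icc_self hy)))
    have hc0 : 0 < c := lt_trans (hqpos _) hc.1
    have hcδ : c ≤ δ := le_of_lt (lt_trans hc.2 hn)
    have hb := hδ c hc0 hcδ
    have hdiffpos : 0 < q n - q (n + 1) := sub_pos.mpr (hqlt n)
    have hθeq : Real.log (V₁ (q n)) - Real.log (V₁ (q (n + 1))) =
        (deriv V₁ c / V₁ c) * (q n - q (n + 1)) := by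
      rw [hceq, div_mul_cancel₀ _ (ne_of_gt hdiffpos)]
    have habs : |deriv V₁ c / V₁ c| ≤ ε / c := by
      rw [le_div_iff₀ hc0]
      calc |deriv V₁ c / V₁ c| * c = |c * deriv V₁ c / V₁ c| := by
            rw [mul_div_assoc, abs_mul, abs_of_pos hc0]; ring
        _ ≤ ε := hb
    have h1v : 0 < 1 - v (q n) := by linarith [hvlt1 n]
    have hcge : q n * (1 - v (q n)) ≤ c := by
      rw [← hrec]; exact hc.1.le
    calc |Real.log (V₁ (q n)) - Real.log (V₁ (q (n + 1)))|
        = |deriv V₁ c / V₁ c| * (q n - q (n + 1)) := by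
          rw [hθeq, abs_mul, abs_of_pos hdiffpos]
      _ ≤ (ε / c) * (q n * v (q n)) := by
          rw [hqdiff n]
          exact mul_le_mul_of_nonneg_right habs
            (mul_nonneg (hqpos n).le (hvpos n).le)
      _ ≤ ε * v (q n) / (1 - v (q n)) := by
          rw [div_mul_eq_mul_div, div_le_div_iff₀ hc0 h1v]
          have : ε * (q n * v (q n)) * (1 - v (q n)) =
              ε * v (q n) * (q n * (1 - v (q n))) := by ring
          rw [this]
          exact mul_le_mul_of_nonneg_left hcge (mul_nonneg hε.le (hvpos n).le)
  have hθv : Tendsto (fun n => (Real.log (V₁ (q n)) - Real.log (V₁ (q (n + 1)))) / v (q n))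
      atTop (𝓝 0) := by
    rw [NormedAddCommGroup.tendsto_nhds_zero]
    intro ε hε
    have hhalf : ∀ᶠ n in atTop, v (q n) < 1 / 2 :=
      hv0.eventually (gt_mem_nhds (by norm_num))
    filter_upwards [hθbound (ε / 4) (by positivity), hhalf] with n h1 h2
    have hvn := hvpos n
    have h1v : (1:ℝ) / 2 ≤ 1 - v (q n) := by linarith
    rw [Real.norm_eq_abs, abs_div, abs_of_pos hvn, div_lt_iff₀ hvn]
    calc |Real.log (V₁ (q n)) - Real.log (V₁ (q (n + 1)))|
        ≤ ε / 4 * v (q n) / (1 - v (q n)) := h1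
      _ ≤ ε / 4 * v (q n) / (1 / 2) := by
          apply div_le_div_of_nonneg_left (by positivity) (by norm_num) h1v
      _ = ε / 2 * v (q n) := by ring
      _ < ε * v (q n) := by nlinarith
  have hθ0 : Tendsto (fun n => Real.log (V₁ (q n)) - Real.log (V₁ (q (n + 1))))
      atTop (𝓝 0) := by
    have h := hθv.mul hv0
    rw [mul_zero] at h
    exact h.congr fun n => div_mul_cancel₀ _ (ne_of_gt (hvpos n))
  -- the exact identity for the increments of 1 / v(q n)
  have hexpθ : ∀ n, Real.exp (Real.log (V₁ (q n)) - Real.log (V₁ (q (n + 1)))) =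
      V₁ (q n) / V₁ (q (n + 1)) := by
    intro n
    rw [Real.exp_sub, Real.exp_log (hV₁great n), Real.exp_log (hV₁great (n + 1))]
  have hid : ∀ n, 1 / v (q (n + 1)) - 1 / v (q n) =
      ((1 - v (q n)) ^ (-γ) *
        Real.exp (Real.log (V₁ (q n)) - Real.log (V₁ (q (n + 1)))) - 1) / v (q n) := by
    intro n
    have h1 : 0 < 1 - v (q n) := by linarith [hvlt1 n]
    have e1 : v (q (n + 1)) = q n ^ γ * (1 - v (q n)) ^ γ * V₁ (q (n + 1)) := by
      rw [hv (q (n + 1)), hrec n, Real.mul_rpow (hqpos n).le h1.le]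
    have h3 : (1 - v (q n)) ^ (-γ) = ((1 - v (q n)) ^ γ)⁻¹ := by
      rw [Real.rpow_neg h1.le]
    rw [hexpθ, h3, e1, hv (q n)]
    have hA : (0:ℝ) < q n ^ γ := Real.rpow_pos_of_pos (hqpos n) γ
    have hB : (0:ℝ) < (1 - v (q n)) ^ γ := Real.rpow_pos_of_pos h1 γ
    have hW := hV₁great n
    have hW' := hV₁great (n + 1)
    field_simp
  -- slope limit: ((1-u)^(-γ) - 1)/u → γ as u → 0
  have hslope : Tendsto (fun n => ((1 - v (q n)) ^ (-γ) - 1) / v (q n)) atTop (𝓝 γ) := by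
    have hf : HasDerivAt (fun u : ℝ => (1 - u) ^ (-γ)) γ 0 := by
      have h1 : HasDerivAt (fun u : ℝ => 1 - u) (-1) 0 := (hasDerivAt_id 0).const_sub 1
      have h2 : HasDerivAt (fun x : ℝ => x ^ (-γ)) (-γ * (1:ℝ) ^ (-γ - 1))
          ((fun u : ℝ => 1 - u) 0) := by
        simpa using Real.hasDerivAt_rpow_const (p := -γ) (x := (1:ℝ)) (Or.inl one_ne_zero)
      have h3 := h2.comp 0 h1
      have : -γ * (1:ℝ) ^ (-γ - 1) * (-1) = γ := by
        rw [Real.one_rpow]; ring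
      rw [this] at h3
      exact h3
    have hsl := hasDerivAt_iff_tendsto_slope.mp hf
    have hcomp : Tendsto (fun n => v (q n)) atTop (𝓝[≠] (0:ℝ)) :=
      tendsto_nhdsWithin_of_tendsto_nhds_of_eventually_within _ hv0
        (Eventually.of_forall fun n => ne_of_gt (hvpos n))
    refine (hsl.comp hcomp).congr fun n => ?_
    simp only [Function.comp_apply, slope_def_field]
    rw [sub_zero, sub_zero, Real.one_rpow]
  -- limit of the second corrector
  have hexplim : Tendsto
      (fun n => Real.exp (Real.log (V₁ (q n)) - Real.log (V₁ (q (n + 1))))) atTop (𝓝 1) := by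
    have := (Real.continuous_exp.continuousAt (x := (0:ℝ))).tendsto.comp hθ0
    simpa [Function.comp_def] using this
  have hBlim : Tendsto
      (fun n => (Real.exp (Real.log (V₁ (q n)) - Real.log (V₁ (q (n + 1)))) - 1) / v (q n))
      atTop (𝓝 0) := by
    have hg : Tendsto (fun n => 2 * |(Real.log (V₁ (q n)) - Real.log (V₁ (q (n + 1)))) / v (q n)|)
        atTop (𝓝 0) := by
      have := (hθv.abs).const_mul 2
      simpa using this
    apply squeeze_zero_norm' _ hg
    have hsmall : ∀ᶠ n in atTop, |Real.log (V₁ (q n)) - Real.log (V₁ (q (n + 1)))| ≤ 1 := by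
      filter_upwards [hθ0.eventually (gt_mem_nhds (by norm_num : (0:ℝ) < 1)),
        hθ0.eventually (lt_mem_nhds (by norm_num : (-1:ℝ) < 0))] with n h1 h2
      rw [abs_le]; constructor <;> linarith
    filter_upwards [hsmall] with n hn
    have hvn := hvpos n
    rw [Real.norm_eq_abs, abs_div, abs_of_pos hvn, abs_div, abs_of_pos hvn,
      ← mul_div_assoc]
    exact div_le_div_of_nonneg_right (Real.abs_exp_sub_one_le hn) hvn.le
  -- the increments converge to γ
  have hdlim : Tendsto (fun n => 1 / v (q (n + 1)) - 1 / v (q n)) atTop (𝓝 γ) := by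
    have h := (hslope.mul hexplim).add hBlim
    rw [mul_one, add_zero] at h
    refine h.congr fun n => ?_
    rw [hid n]
    have hvn := (hvpos n).ne'
    field_simp
    ring
  -- Cesàro
  have hces : Tendsto (fun n : ℕ => (1 / v (q n) - 1 / v (q 0)) / n) atTop (𝓝 γ) := by
    have h := hdlim.cesaro
    refine h.congr fun n => ?_
    rw [Finset.sum_range_sub (fun i => 1 / v (q i)), inv_mul_eq_div]
  have hbn : Tendsto (fun n : ℕ => (1 / v (q n)) / n) atTop (𝓝 γ) := by
    have h2 : Tendsto (fun n : ℕ => (1 / v (q 0)) / n) atTop (𝓝 0) :=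
      tendsto_const_div_atTop_nhds_zero_nat _
    have h := hces.add h2
    rw [add_zero] at h
    refine h.congr fun n => ?_
    ring
  -- conclusion
  have hfin : Tendsto (fun n : ℕ => γ / ((1 / v (q n)) / n)) atTop (𝓝 (γ / γ)) :=
    tendsto_const_nhds.div hbn (ne_of_gt hγ)
  rw [div_self (ne_of_gt hγ)] at hfin
  refine hfin.congr' ?_
  filter_upwards [eventually_ge_atTop 1] with n hn
  have hn0 : (n:ℝ) ≠ 0 := Nat.cast_ne_zero.mpr (by omega)
  have hvn := (hvpos n).ne'
  field_simp
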